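/- Let p be a prime, n ≥ 2 coprime to p, k a positive integer, and 1 ≤ i ≤ k. Fix b ∈ Z/(n^(p^k)−1)Z. The number of 'proper solutions' of R_b^(p^i)(x) = x, i.e., elements x with R_b^(p^i)(x) = x but R_b^(p^j)(x) ≠ x for all 0 ≤ j < i, is exactly n^(p^i) − n^(p^(i−1)). -/

import Mathlib

/-- Counting the kernel of multiplication by `c` on `ZMod (c * e)`. -/
lemma count_ker_aux (M c e : ℕ) (hM : M = c * e) (hc : c ≠ 0) (he : e ≠ 0) :
    Nat.card {z : ZMod M // (c : ZMod M) * z = 0} = c := by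
  subst hM
  haveI : NeZero (c * e) := ⟨by simp [hc, he]⟩
  have hcpos : 0 < c := Nat.pos_of_ne_zero hc
  have hepos : 0 < e := Nat.pos_of_ne_zero he
  have key : ∀ z : ZMod (c * e), (c : ZMod (c * e)) * z = 0 ↔ e ∣ z.val := by
    intro z
    have h1 : ((z.val : ℕ) : ZMod (c * e)) = z := ZMod.natCast_rightInverse z
    conv_lhs => rw [← h1, ← Nat.cast_mul]
    rw [ZMod.natCast_eq_zero_iff, Nat.mul_dvd_mul_iff_left hcpos]
  have eqv : {z : ZMod (c * e) // (c : ZMod (c * e)) * z = 0} ≃ Fin c := by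
    refine ⟨fun z => ⟨z.1.val / e, ?_⟩, fun t => ⟨((t.1 * e : ℕ) : ZMod (c * e)), ?_⟩, ?_, ?_⟩
    · have := z.1.val_lt
      exact Nat.div_lt_of_lt_mul (lt_of_lt_of_eq this (Nat.mul_comm c e))
    · rw [key]
      have hlt : t.1 * e < c * e := (Nat.mul_lt_mul_right hepos).mpr t.2
      rw [ZMod.val_natCast_of_lt hlt]
      exact dvd_mul_left e t.1
    · intro z
      apply Subtype.ext
      have hd : e ∣ z.1.val := (key z.1).mp z.2
      simp only
      rw [Nat.div_mul_cancel hd]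
      exact ZMod.natCast_rightInverse z.1
    · intro t
      apply Fin.ext
      have hlt : t.1 * e < c * e := (Nat.mul_lt_mul_right hepos).mpr t.2
      simp only
      rw [ZMod.val_natCast_of_lt hlt, Nat.mul_div_cancel _ hepos]
  rw [Nat.card_congr eqv, Nat.card_eq_fintype_card, Fintype.card_fin]

theorem card_proper_solutions_aux (p : ℕ) (hp : p.Prime) (n k i : ℕ) (hn : 2 ≤ n)
    (hi : 1 ≤ i) (hik : i ≤ k) (M : ℕ) (hMdef : M = n ^ p ^ k - 1) (b : ZMod M) :
    Nat.card {x : ZMod M //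
      (fun y : ZMod M => (n : ZMod M) * y - (n - 1) * b)^[p ^ i] x = x ∧
      ∀ j < i, (fun y : ZMod M => (n : ZMod M) * y - (n - 1) * b)^[p ^ j] x ≠ x} =
      n ^ p ^ i - n ^ p ^ (i - 1) := by
  set f : ZMod M → ZMod M := fun y => (n : ZMod M) * y - (n - 1) * b with hf
  have hppos : ∀ m : ℕ, 0 < p ^ m := fun m => pow_pos hp.pos m
  have hnl : ∀ l : ℕ, 1 ≤ n ^ l := fun l => Nat.one_le_pow _ _ (by omega)
  have hMpos : 0 < M := by
    have : 2 ≤ n ^ p ^ k := le_trans hn (Nat.le_self_pow (hppos k).ne' n)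
    omega
  haveI : NeZero M := ⟨by omega⟩
  have hstep : ∀ y, f y = (n : ZMod M) * y - ((n : ZMod M) - 1) * b := fun y => rfl
  have hiter : ∀ (l : ℕ) (x : ZMod M), f^[l] x - b = (n : ZMod M) ^ l * (x - b) := by
    intro l
    induction l with
    | zero => intro x; simp
    | succ l ih =>
      intro x
      rw [Function.iterate_succ_apply', hstep, pow_succ]
      linear_combination (n : ZMod M) * ih x
  have hfix : ∀ (l : ℕ) (x : ZMod M),
      f^[l] x = x ↔ ((n ^ l - 1 : ℕ) : ZMod M) * (x - b) = 0 := by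
    intro l x
    have hcast : ((n ^ l - 1 : ℕ) : ZMod M) = (n : ZMod M) ^ l - 1 := by
      have := hnl l
      push_cast [Nat.cast_sub this]
      ring
    rw [hcast]
    constructor
    · intro h
      have h2 := hiter l x
      rw [h] at h2
      linear_combination -h2
    · intro h
      have h2 := hiter l x
      have h3 : f^[l] x - b = x - b := by linear_combination h + h2
      have := sub_left_injective h3
      exact sub_left_injective h3
  have hcount : ∀ m : ℕ, m ≤ k →
      Nat.card {x : ZMod M // f^[p ^ m] x = x} = n ^ p ^ m - 1 := by
    intro m hm
    set c := n ^ p ^ m - 1 with hcdef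
    have hcdvd : c ∣ M := by
      have h1 : n ^ p ^ k = (n ^ p ^ m) ^ p ^ (k - m) := by
        rw [← pow_mul, ← pow_add, Nat.add_sub_cancel' hm]
      have := Nat.sub_dvd_pow_sub_pow (n ^ p ^ m) 1 (p ^ (k - m))
      rw [one_pow] at this
      rw [hMdef, h1]
      exact this
    have h2 : 2 ≤ n ^ p ^ m := le_trans hn (Nat.le_self_pow (hppos m).ne' n)
    have hc0 : c ≠ 0 := by omega
    obtain ⟨e, he⟩ := hcdvd
    have he0 : e ≠ 0 := by rintro rfl; simp at he; omega
    have eqv : {x : ZMod M // f^[p ^ m] x = x} ≃ {z : ZMod M // (c : ZMod M) * z = 0} := by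
      refine Equiv.subtypeEquiv (Equiv.subRight b) ?_
      intro x
      simp only [Equiv.subRight_apply]
      rw [hfix]
    rw [Nat.card_congr eqv, count_ker_aux M c e he hc0 he0]
  have hred : ∀ x : ZMod M,
      (f^[p ^ i] x = x ∧ ∀ j < i, f^[p ^ j] x ≠ x) ↔
      (f^[p ^ i] x = x ∧ ¬ f^[p ^ (i - 1)] x = x) := by
    intro x
    constructor
    · rintro ⟨h1, h2⟩
      exact ⟨h1, h2 _ (by omega)⟩
    · rintro ⟨h1, h2⟩
      refine ⟨h1, fun j hj hfx => h2 ?_⟩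
      have : p ^ (i - 1) = p ^ j * p ^ (i - 1 - j) := by
        rw [← pow_add]; congr 1; omega
      rw [this, Function.iterate_mul]
      exact Function.iterate_fixed hfx _
  rw [Nat.card_congr (Equiv.subtypeEquivRight hred)]
  set S : Set (ZMod M) := {x | f^[p ^ i] x = x} with hS
  set T : Set (ZMod M) := {x | f^[p ^ (i - 1)] x = x} with hT
  have hTS : T ⊆ S := by
    intro x hx
    have hpe : p ^ i = p ^ (i - 1) * p ^ (i - (i - 1)) := by
      rw [← pow_add]; congr 1; omega
    simp only [hS, hT, Set.mem_setOf_eq] at *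
    rw [hpe, Function.iterate_mul]
    exact Function.iterate_fixed hx _
  have hcard : Nat.card {x : ZMod M // f^[p ^ i] x = x ∧ ¬ f^[p ^ (i - 1)] x = x}
      = (S \ T).ncard := by
    rw [← Nat.card_coe_set_eq]
    exact Nat.card_congr (Equiv.subtypeEquivRight fun x => Iff.rfl)
  rw [hcard, Set.ncard_diff hTS]
  have hSc : S.ncard = n ^ p ^ i - 1 := by
    rw [← Nat.card_coe_set_eq]
    exact hcount i hik
  have hTc : T.ncard = n ^ p ^ (i - 1) - 1 := by
    rw [← Nat.card_coe_set_eq]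
    exact hcount (i - 1) (by omega)
  rw [hSc, hTc]
  have h1 : n ^ p ^ (i - 1) ≤ n ^ p ^ i :=
    Nat.pow_le_pow_right (by omega) (Nat.pow_le_pow_right hp.pos (by omega))
  have h2 := hnl (p ^ (i - 1))
  omega

/-- The number of proper solutions of `R_b^(p^i)(x) = x` is `n^(p^i) - n^(p^(i-1))`. -/
theorem card_proper_solutions (p : ℕ) (hp : p.Prime) (n k i : ℕ) (hn : 2 ≤ n)
    (hnp : Nat.Coprime n p) (hi : 1 ≤ i) (hik : i ≤ k)
    (b : ZMod (n ^ p ^ k - 1)) :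
    Nat.card {x : ZMod (n ^ p ^ k - 1) //
      (fun y : ZMod (n ^ p ^ k - 1) => (n : ZMod (n ^ p ^ k - 1)) * y - (n - 1) * b)^[p ^ i] x = x ∧
      ∀ j < i,
        (fun y : ZMod (n ^ p ^ k - 1) =>
          (n : ZMod (n ^ p ^ k - 1)) * y - (n - 1) * b)^[p ^ j] x ≠ x} =
      n ^ p ^ i - n ^ p ^ (i - 1) := by
  exact card_proper_solutions_aux p hp n k i hn hi hik _ rfl b
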